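/- With Z, M, ω, θ, N as in the setup, define Γ_L = M Mᵀ − (1/N) ω ωᵀ and Γ_R = Mᵀ M − (1/N) θ θᵀ. Suppose ζ ∈ ℝ^n is a nonzero vector with Γ_L ζ = λ ζ for some real λ ≠ 0. Then ωᵀζ = 0, the vector ξ := Mᵀζ satisfies Γ_R ξ = λ ξ, and θᵀξ = 0. -/

import Mathlib

open Matrix

lemma vecMulVec_mulVec' {n m : ℕ} (v : Fin n → ℝ) (w x : Fin m → ℝ) :
    Matrix.vecMulVec v w *ᵥ x = (w ⬝ᵥ x) • v := by
  funext i
  simp only [Matrix.mulVec, dotProduct, vecMulVec_apply, Pi.smul_apply, smul_eq_mul,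
    Finset.sum_mul]
  exact Finset.sum_congr rfl fun j _ => by ring


/-- With `Γ_L = M Mᵀ − (1/N) ω ωᵀ` and `Γ_R = Mᵀ M − (1/N) θ θᵀ` as in the natural-order
computation: if `ζ ≠ 0` satisfies `Γ_L ζ = λ ζ` with `λ ≠ 0`, then `ωᵀζ = 0`, the vector
`ξ = Mᵀζ` satisfies `Γ_R ξ = λ ξ`, and `θᵀξ = 0`. -/
theorem fiedler_vector_transfer (n m : ℕ) (Z : Matrix (Fin n) (Fin m) ℝ)
    (h01 : ∀ i j, Z i j = 0 ∨ Z i j = 1)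
    (w : Fin n → ℝ) (hw : ∀ i, w i = ∑ j, Z i j) (hwpos : ∀ i, 0 < w i)
    (d : Fin m → ℝ) (hd : ∀ j, d j = ∑ i, Z i j) (hdpos : ∀ j, 0 < d j)
    (N : ℝ) (hN : N = ∑ i, w i)
    (M : Matrix (Fin n) (Fin m) ℝ)
    (hM : M = Matrix.diagonal (fun i => (Real.sqrt (w i))⁻¹) * Z *
      Matrix.diagonal (fun j => (Real.sqrt (d j))⁻¹))
    (ω : Fin n → ℝ) (hω : ∀ i, ω i = Real.sqrt (w i))
    (θ : Fin m → ℝ) (hθ : ∀ j, θ j = Real.sqrt (d j))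
    (ΓL : Matrix (Fin n) (Fin n) ℝ) (hΓL : ΓL = M * Mᵀ - N⁻¹ • Matrix.vecMulVec ω ω)
    (ΓR : Matrix (Fin m) (Fin m) ℝ) (hΓR : ΓR = Mᵀ * M - N⁻¹ • Matrix.vecMulVec θ θ)
    (lam : ℝ) (hlam : lam ≠ 0)
    (ζ : Fin n → ℝ) (hζ : ζ ≠ 0) (heig : Matrix.mulVec ΓL ζ = lam • ζ)
    (ξ : Fin m → ℝ) (hξ : ξ = Matrix.mulVec Mᵀ ζ) :
    dotProduct ω ζ = 0 ∧
      Matrix.mulVec ΓR ξ = lam • ξ ∧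
      dotProduct θ ξ = 0 := by
  have hsw : ∀ i, Real.sqrt (w i) ≠ 0 := fun i => (Real.sqrt_pos.mpr (hwpos i)).ne'
  have hsd : ∀ j, Real.sqrt (d j) ≠ 0 := fun j => (Real.sqrt_pos.mpr (hdpos j)).ne'
  have hMe : ∀ i j, M i j = (Real.sqrt (w i))⁻¹ * Z i j * (Real.sqrt (d j))⁻¹ := by
    intro i j
    rw [hM, Matrix.mul_diagonal, Matrix.diagonal_mul]
  -- M θ = ω
  have hMθ : M *ᵥ θ = ω := by
    funext i
    have h1 : ∀ j, M i j * θ j = (Real.sqrt (w i))⁻¹ * Z i j := by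
      intro j
      rw [hMe, hθ, mul_assoc, inv_mul_cancel₀ (hsd j), mul_one]
    simp only [Matrix.mulVec, dotProduct, h1, ← Finset.mul_sum, ← hw i, hω]
    field_simp
    exact Real.div_sqrt
  -- Mᵀ ω = θ
  have hMω : Mᵀ *ᵥ ω = θ := by
    funext j
    have h1 : ∀ i, Mᵀ j i * ω i = Z i j * (Real.sqrt (d j))⁻¹ := by
      intro i
      rw [Matrix.transpose_apply, hMe, hω]
      rw [mul_right_comm, mul_right_comm _ (Z i j), inv_mul_cancel₀ (hsw i), one_mul]
    simp only [Matrix.mulVec, dotProduct, h1, ← Finset.sum_mul, ← hd j, hθ]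
    field_simp
    exact Real.div_sqrt
  have hωω : ω ⬝ᵥ ω = N := by
    simp only [dotProduct, hω, hN]
    exact Finset.sum_congr rfl fun i _ => Real.mul_self_sqrt (hwpos i).le
  obtain ⟨i0, hi0⟩ : ∃ i, ζ i ≠ 0 := Function.ne_iff.mp hζ
  have hNne : N ≠ 0 := by
    have : (0:ℝ) < ∑ i, w i :=
      Finset.sum_pos (fun i _ => hwpos i) ⟨i0, Finset.mem_univ i0⟩
    rw [hN]; exact this.ne'
  have hΓLω : ΓL *ᵥ ω = 0 := by
    rw [hΓL, Matrix.sub_mulVec, Matrix.smul_mulVec, vecMulVec_mulVec', hωω,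
      ← Matrix.mulVec_mulVec, hMω, hMθ, smul_smul, inv_mul_cancel₀ hNne, one_smul, sub_self]
  have hΓLsymm : ΓLᵀ = ΓL := by
    rw [hΓL, Matrix.transpose_sub, Matrix.transpose_smul, Matrix.transpose_mul,
      Matrix.transpose_transpose]
    congr 1
    funext i j
    simp [vecMulVec_apply, mul_comm]
  have hωζ : ω ⬝ᵥ ζ = 0 := by
    have h1 : ω ⬝ᵥ (ΓL *ᵥ ζ) = lam * (ω ⬝ᵥ ζ) := by
      rw [heig, dotProduct_smul, smul_eq_mul]
    have h2 : ω ⬝ᵥ (ΓL *ᵥ ζ) = 0 := by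
      rw [Matrix.dotProduct_mulVec, ← Matrix.mulVec_transpose, hΓLsymm, hΓLω,
        zero_dotProduct]
    exact (mul_eq_zero.mp (h2 ▸ h1.symm)).resolve_left hlam
  have hθξ : θ ⬝ᵥ ξ = 0 := by
    rw [hξ, Matrix.dotProduct_mulVec, ← Matrix.mulVec_transpose, Matrix.transpose_transpose,
      hMθ, hωζ]
  refine ⟨hωζ, ?_, hθξ⟩
  have hvv : Matrix.vecMulVec ω ω *ᵥ ζ = 0 := by
    rw [vecMulVec_mulVec', hωζ, zero_smul]
  have hMMζ : (M * Mᵀ) *ᵥ ζ = lam • ζ := by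
    have h := heig
    rw [hΓL, Matrix.sub_mulVec, Matrix.smul_mulVec, hvv, smul_zero, sub_zero] at h
    exact h
  rw [hΓR, Matrix.sub_mulVec, Matrix.smul_mulVec, vecMulVec_mulVec', hθξ, zero_smul,
    smul_zero, sub_zero, hξ, Matrix.mulVec_mulVec, Matrix.mul_assoc, ← Matrix.mulVec_mulVec,
    hMMζ, Matrix.mulVec_smul]
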